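/- Let A be a monoidal category, C a left A-module category, and let D, E be right A-module categories. Suppose φ: D → E and ψ: E → D are right-A-linear functors forming an adjunction φ ⊣ ψ. Then the induced functors φ_C: D ⊗_A C → E ⊗_A C and ψ_C: E ⊗_A C → D ⊗_A C on relative tensor products form an adjunction φ_C ⊣ ψ_C. -/

import Mathlib

open CategoryTheory MonoidalCategory

attribute [local instance] CategoryTheory.endofunctorMonoidalCategory

universe v₁ v₂ u₁ u₂

variable {A : Type*} [Category A] [MonoidalCategory A]

/-- An (left) `A`-module category structure on `C`, for a monoidal category `A`:
a strong monoidal functor from `A` to the monoidal category of endofunctors of `C`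
(with composition as tensor product), encoding the action `A × C → C` together with
its coherence data. -/
structure ModAction (A : Type*) [Category A] [MonoidalCategory A]
    (C : Type*) [Category C] where
  act : A ⥤ (C ⥤ C)
  monoidal : act.Monoidal

attribute [instance] ModAction.monoidal

variable {C D E : Type*} [Category C] [Category D] [Category E]

/-- An `A`-linear functor between `A`-module categories: a functor `F` together with
coherent isomorphisms `e a` intertwining the actions, natural in `a` and compatible
with the unit and multiplication coherence of the actions. -/
structure LinFun (ρC : ModAction A C) (ρD : ModAction A D) where
  F : C ⥤ D
  e : ∀ a : A, ρC.act.obj a ⋙ F ≅ F ⋙ ρD.act.obj a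
  naturality : ∀ {a b : A} (f : a ⟶ b),
    Functor.whiskerRight (ρC.act.map f) F ≫ (e b).hom =
      (e a).hom ≫ Functor.whiskerLeft F (ρD.act.map f)
  unit_compat :
    Functor.whiskerRight (Functor.LaxMonoidal.ε ρC.act) F ≫ (e (𝟙_ A)).hom =
      Functor.whiskerLeft F (Functor.LaxMonoidal.ε ρD.act)
  mul_compat : ∀ a b : A,
    Functor.whiskerRight (Functor.LaxMonoidal.μ ρC.act a b) F ≫ (e (a ⊗ b)).hom =
      Functor.whiskerLeft (ρC.act.obj a) (e b).hom ≫
        Functor.whiskerRight (e a).hom (ρD.act.obj b) ≫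
        Functor.whiskerLeft F (Functor.LaxMonoidal.μ ρD.act a b)

/-- The property of a natural transformation between the underlying functors of two
`A`-linear functors of being `A`-linear (compatible with the linearity isomorphisms). -/
def IsLinHom {ρC : ModAction A C} {ρD : ModAction A D} (F G : LinFun ρC ρD)
    (τ : F.F ⟶ G.F) : Prop :=
  ∀ a : A, Functor.whiskerLeft (ρC.act.obj a) τ ≫ (G.e a).hom =
    (F.e a).hom ≫ Functor.whiskerRight τ (ρD.act.obj a)

/-- The category `Fun_A(C, D)` of `A`-linear functors and `A`-linear natural
transformations. -/
instance {ρC : ModAction A C} {ρD : ModAction A D} : Category (LinFun ρC ρD) where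
  Hom F G := { τ : F.F ⟶ G.F // IsLinHom F G τ }
  id F := ⟨𝟙 F.F, by intro a; simp⟩
  comp {F G H} f g := ⟨f.val ≫ g.val, by
    intro a
    rw [Functor.whiskerLeft_comp, Category.assoc, g.2 a, ← Category.assoc,
      f.2 a, Category.assoc, ← Functor.whiskerRight_comp]⟩
  id_comp f := Subtype.ext (Category.id_comp f.val)
  comp_id f := Subtype.ext (Category.comp_id f.val)
  assoc f g h := Subtype.ext (Category.assoc f.val g.val h.val)

/-- The identity `A`-linear functor. -/
def LinFun.id (ρC : ModAction A C) : LinFun ρC ρC where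
  F := 𝟭 C
  e a := Functor.rightUnitor _ ≪≫ (Functor.leftUnitor _).symm
  naturality := by intros; ext X; simp
  unit_compat := by ext X; simp
  mul_compat := by intros; ext X; simp

/-- The composition of `A`-linear functors. -/
def LinFun.comp {ρC : ModAction A C} {ρD : ModAction A D} {ρE : ModAction A E}
    (F : LinFun ρC ρD) (G : LinFun ρD ρE) : LinFun ρC ρE where
  F := F.F ⋙ G.F
  e a := Functor.isoWhiskerRight (F.e a) G.F ≪≫ Functor.isoWhiskerLeft F.F (G.e a)
  naturality := by
    intro a b f
    ext X
    have h1 := NatTrans.congr_app (F.naturality f) X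
    have h2 := NatTrans.congr_app (G.naturality f) (F.F.obj X)
    simp only [NatTrans.comp_app, Functor.comp_obj, Functor.whiskerRight_app, Functor.whiskerLeft_app]
      at h1 h2
    simp only [Functor.comp_obj, Functor.whiskerRight_app, Functor.comp_map, Iso.trans_hom,
      Functor.isoWhiskerRight_hom, Functor.isoWhiskerLeft_hom, NatTrans.comp_app, Functor.whiskerRight_app,
      Functor.whiskerLeft_app, Functor.whiskerLeft_app, Category.assoc]
    rw [← G.F.map_comp_assoc, h1, G.F.map_comp, Category.assoc, h2]
  unit_compat := by
    ext X
    have h1 := NatTrans.congr_app F.unit_compat X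
    have h2 := NatTrans.congr_app G.unit_compat (F.F.obj X)
    simp only [NatTrans.comp_app, Functor.comp_obj, Functor.whiskerRight_app, Functor.whiskerLeft_app]
      at h1 h2
    simp only [Functor.comp_obj, Functor.whiskerRight_app, Functor.comp_map, Iso.trans_hom,
      Functor.isoWhiskerRight_hom, Functor.isoWhiskerLeft_hom, NatTrans.comp_app, Functor.whiskerRight_app,
      Functor.whiskerLeft_app, Category.assoc]
    rw [← G.F.map_comp_assoc, h1, h2]
  mul_compat := by
    intro a b
    ext X
    have h1 := NatTrans.congr_app (F.mul_compat a b) X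
    have h2 := NatTrans.congr_app (G.mul_compat a b) (F.F.obj X)
    simp only [NatTrans.comp_app, Functor.comp_obj, Functor.whiskerRight_app, Functor.whiskerLeft_app]
      at h1 h2
    simp only [Functor.comp_obj, Functor.whiskerRight_app, Functor.comp_map, Iso.trans_hom,
      Functor.isoWhiskerRight_hom, Functor.isoWhiskerLeft_hom, NatTrans.comp_app, Functor.whiskerRight_app,
      Functor.whiskerLeft_app, Category.assoc]
    rw [← G.F.map_comp_assoc, h1, G.F.map_comp, G.F.map_comp, Category.assoc,
      Category.assoc, h2]
    simp only [Functor.map_comp, Category.assoc]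
    erw [(G.e b).hom.naturality_assoc ((F.e a).hom.app X)]
    rfl


section Whiskering

variable {ρC : ModAction A C} {ρD : ModAction A D} {ρE : ModAction A E}

/-- Right whiskering of an `A`-linear natural transformation with an `A`-linear
functor. -/
def whiskerRightLin {F F' : LinFun ρC ρD} (τ : F ⟶ F') (G : LinFun ρD ρE) :
    F.comp G ⟶ F'.comp G :=
  ⟨Functor.whiskerRight τ.val G.F, by
    intro a
    ext X
    have h := NatTrans.congr_app (τ.2 a) X
    simp only [NatTrans.comp_app, Functor.whiskerLeft_app, Functor.whiskerRight_app,
      Functor.comp_obj] at h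
    simp only [LinFun.comp, Iso.trans_hom, NatTrans.comp_app, Functor.whiskerLeft_app,
      Functor.whiskerRight_app, Functor.isoWhiskerRight_hom, Functor.isoWhiskerLeft_hom, Functor.comp_obj,
      Functor.comp_map, Category.assoc]
    rw [← G.F.map_comp_assoc, h, G.F.map_comp, Category.assoc]
    erw [(G.e a).hom.naturality (τ.val.app X)]
    rfl⟩

/-- Left whiskering of an `A`-linear natural transformation with an `A`-linear
functor. -/
def whiskerLeftLin (F : LinFun ρC ρD) {G G' : LinFun ρD ρE} (τ : G ⟶ G') :
    F.comp G ⟶ F.comp G' :=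
  ⟨Functor.whiskerLeft F.F τ.val, by
    intro a
    ext X
    have h := NatTrans.congr_app (τ.2 a) (F.F.obj X)
    simp only [NatTrans.comp_app, Functor.whiskerLeft_app, Functor.whiskerRight_app,
      Functor.comp_obj] at h
    simp only [LinFun.comp, Iso.trans_hom, NatTrans.comp_app, Functor.whiskerLeft_app,
      Functor.whiskerRight_app, Functor.isoWhiskerRight_hom, Functor.isoWhiskerLeft_hom, Functor.comp_obj,
      Functor.comp_map, Category.assoc]
    erw [← τ.val.naturality_assoc ((F.e a).hom.app X), h]⟩

end Whiskering

section StructuralCells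

variable {B : Type*} [Category B]
variable {ρB : ModAction A B} {ρC : ModAction A C} {ρD : ModAction A D}
  {ρE : ModAction A E}

/-- The associator cell for composition of `A`-linear functors (the identity natural
transformation, which is `A`-linear). -/
def assocLin (F : LinFun ρB ρC) (G : LinFun ρC ρD) (H : LinFun ρD ρE) :
    (F.comp G).comp H ⟶ F.comp (G.comp H) :=
  ⟨𝟙 (F.F ⋙ G.F ⋙ H.F), by intro a; ext X; simp [LinFun.comp]⟩

/-- The left unitor cell `id ∘ F ⟶ F` for `A`-linear functors. -/
def leftUnitorLin (F : LinFun ρC ρD) : (LinFun.id ρC).comp F ⟶ F :=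
  ⟨𝟙 F.F, by intro a; ext X; simp [LinFun.comp, LinFun.id]⟩

/-- The right unitor cell `F ∘ id ⟶ F` for `A`-linear functors. -/
def rightUnitorLin (F : LinFun ρC ρD) : F.comp (LinFun.id ρD) ⟶ F :=
  ⟨𝟙 F.F, by intro a; ext X; simp [LinFun.comp, LinFun.id]⟩

end StructuralCells

section Tensor

/-- Pseudofunctorial data for the operation "relative tensor product with a fixed left
`A`-module category `(CC, ρC)`", i.e. `M ↦ M ⊗_A CC`, on a family of right `A`-module
categories `(Cat_ i, ρ i)` (right modules are encoded as left module categories over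
the monoidal opposite): for each `i` a category `T i` standing for `(Cat_ i) ⊗_A CC`,
functorial images of linear functors and of linear natural transformations, unit and
composition comparison isomorphisms, and the pseudofunctor coherence laws (naturality
of the comparisons, associativity, and unitality). This is the functoriality of the
relative tensor product, as provided by the bar construction. -/
structure TensorPseudofunctor {ι : Type*} {Cat_ : ι → Type*} [∀ i, Category (Cat_ i)]
    (ρ : ∀ i, ModAction A (Cat_ i))
    {A₀ CC : Type*} [Category A₀] [MonoidalCategory A₀] [Category CC]
    (ρC : ModAction A₀ CC) where
  T : ι → Type*
  [catT : ∀ i, Category.{v₁} (T i)]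
  map : ∀ {i j : ι}, LinFun (ρ i) (ρ j) ⥤ (T i ⥤ T j)
  unitIso : ∀ i, map.obj (LinFun.id (ρ i)) ≅ 𝟭 (T i)
  compIso : ∀ {i j k : ι} (F : LinFun (ρ i) (ρ j)) (G : LinFun (ρ j) (ρ k)),
    map.obj F ⋙ map.obj G ≅ map.obj (F.comp G)
  compIso_natural_left : ∀ {i j k : ι} {F F' : LinFun (ρ i) (ρ j)} (τ : F ⟶ F')
      (G : LinFun (ρ j) (ρ k)),
    Functor.whiskerRight (map.map τ) (map.obj G) ≫ (compIso F' G).hom =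
      (compIso F G).hom ≫ map.map (whiskerRightLin τ G)
  compIso_natural_right : ∀ {i j k : ι} (F : LinFun (ρ i) (ρ j))
      {G G' : LinFun (ρ j) (ρ k)} (τ : G ⟶ G'),
    Functor.whiskerLeft (map.obj F) (map.map τ) ≫ (compIso F G').hom =
      (compIso F G).hom ≫ map.map (whiskerLeftLin F τ)
  assoc_coherence : ∀ {i j k l : ι} (F : LinFun (ρ i) (ρ j)) (G : LinFun (ρ j) (ρ k))
      (H : LinFun (ρ k) (ρ l)),
    Functor.whiskerRight (compIso F G).hom (map.obj H) ≫ (compIso (F.comp G) H).hom ≫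
        map.map (assocLin F G H) =
      Functor.whiskerLeft (map.obj F) (compIso G H).hom ≫ (compIso F (G.comp H)).hom
  left_unit_coherence : ∀ {i j : ι} (F : LinFun (ρ i) (ρ j)),
    (compIso (LinFun.id (ρ i)) F).hom ≫ map.map (leftUnitorLin F) =
      Functor.whiskerRight (unitIso i).hom (map.obj F)
  right_unit_coherence : ∀ {i j : ι} (F : LinFun (ρ i) (ρ j)),
    (compIso F (LinFun.id (ρ j))).hom ≫ map.map (rightUnitorLin F) =
      Functor.whiskerLeft (map.obj F) (unitIso j).hom

attribute [instance] TensorPseudofunctor.catT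

end Tensor


section Aux

variable {ρC : ModAction A C} {ρD : ModAction A D} {ρE : ModAction A E}

/-- Inverse associator cell. -/
def assocLinInv {B : Type*} [Category B] {ρB : ModAction A B}
    (F : LinFun ρB ρC) (G : LinFun ρC ρD) (H : LinFun ρD ρE) :
    F.comp (G.comp H) ⟶ (F.comp G).comp H :=
  ⟨𝟙 (F.F ⋙ G.F ⋙ H.F), by intro a; ext X; simp [LinFun.comp]⟩

end Aux

/-- **Tensoring an adjunction of right `A`-module categories with a left `A`-module
category yields an adjunction.**  Let `A` be a monoidal category, `(Cat_ i, ρ i)` a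
family of right `A`-module categories (left modules over the monoidal opposite `Aᴹᵒᵖ`),
`(CC, ρC)` a left `A`-module category, and `T` the (pseudo)functorial relative tensor
product data `M ↦ M ⊗_A CC`.  If `φ : D ⇄ E : ψ` are right-`A`-linear functors forming
an adjunction in the category of `A`-module categories (the unit and counit are
`A`-linear), then the induced functors `φ_C = T.map φ : D ⊗_A CC ⥤ E ⊗_A CC` and
`ψ_C = T.map ψ` form an adjunction `φ_C ⊣ ψ_C`. -/
theorem stmt4 {A : Type*} [Category A] [MonoidalCategory A]
    {ι : Type*} {Cat_ : ι → Type*} [∀ i, Category (Cat_ i)]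
    (ρ : ∀ i, ModAction Aᴹᵒᵖ (Cat_ i))
    {CC : Type*} [Category CC] (ρC : ModAction A CC)
    (T : TensorPseudofunctor ρ ρC)
    {i j : ι} (φ : LinFun (ρ i) (ρ j)) (ψ : LinFun (ρ j) (ρ i)) (adj : φ.F ⊣ ψ.F)
    (hunit : IsLinHom (LinFun.id (ρ i)) (φ.comp ψ) adj.unit)
    (hcounit : IsLinHom (ψ.comp φ) (LinFun.id (ρ j)) adj.counit) :
    Nonempty (T.map.obj φ ⊣ T.map.obj ψ) := by
  classical
  set Φ := T.map.obj φ with hΦ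
  set Ψ := T.map.obj ψ with hΨ
  let ηL : LinFun.id (ρ i) ⟶ φ.comp ψ := ⟨adj.unit, hunit⟩
  let εL : ψ.comp φ ⟶ LinFun.id (ρ j) := ⟨adj.counit, hcounit⟩
  -- triangle identities at the level of linear functors
  have tri1 : whiskerRightLin ηL φ ≫ assocLin φ ψ φ ≫ whiskerLeftLin φ εL ≫
      rightUnitorLin φ = leftUnitorLin φ := by
    apply Subtype.ext
    show Functor.whiskerRight adj.unit φ.F ≫ 𝟙 _ ≫ Functor.whiskerLeft φ.F adj.counit ≫ 𝟙 _ = 𝟙 φ.F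
    ext X
    simp [adj.left_triangle_components]
  have tri2 : whiskerLeftLin ψ ηL ≫ assocLinInv ψ φ ψ ≫ whiskerRightLin εL ψ ≫
      leftUnitorLin ψ = rightUnitorLin ψ := by
    apply Subtype.ext
    show Functor.whiskerLeft ψ.F adj.unit ≫ 𝟙 _ ≫ Functor.whiskerRight adj.counit ψ.F ≫ 𝟙 _ = 𝟙 ψ.F
    ext X
    simp [adj.right_triangle_components]
  have hLinInv1 : assocLin ψ φ ψ ≫ assocLinInv ψ φ ψ = 𝟙 _ := by
    apply Subtype.ext
    show 𝟙 _ ≫ 𝟙 _ = 𝟙 _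
    simp
  -- unit and counit of the induced adjunction
  let η : 𝟭 (T.T i) ⟶ Φ ⋙ Ψ :=
    (T.unitIso i).inv ≫ T.map.map ηL ≫ (T.compIso φ ψ).inv
  let ε : Ψ ⋙ Φ ⟶ 𝟭 (T.T j) :=
    (T.compIso ψ φ).hom ≫ T.map.map εL ≫ (T.unitIso j).hom
  -- helper identities
  have hA : Functor.whiskerRight (T.map.map ηL) Φ =
      (T.compIso (LinFun.id (ρ i)) φ).hom ≫ T.map.map (whiskerRightLin ηL φ) ≫
        (T.compIso (φ.comp ψ) φ).inv := by
    rw [← Category.assoc, ← T.compIso_natural_left ηL φ, Category.assoc,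
      Iso.hom_inv_id, Category.comp_id]
  have hB : Functor.whiskerRight (T.compIso φ ψ).inv Φ ≫ Functor.whiskerLeft Φ (T.compIso ψ φ).hom =
      (T.compIso (φ.comp ψ) φ).hom ≫ T.map.map (assocLin φ ψ φ) ≫
        (T.compIso φ (ψ.comp φ)).inv := by
    have hwl : Functor.whiskerLeft Φ (T.compIso ψ φ).hom =
        Functor.whiskerRight (T.compIso φ ψ).hom Φ ≫ (T.compIso (φ.comp ψ) φ).hom ≫
          T.map.map (assocLin φ ψ φ) ≫ (T.compIso φ (ψ.comp φ)).inv := by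
      rw [← Category.assoc, ← Category.assoc, Category.assoc
        (Functor.whiskerRight (T.compIso φ ψ).hom Φ), T.assoc_coherence φ ψ φ]
      simp
      rfl
    rw [hwl, ← Category.assoc, ← Functor.whiskerRight_comp, Iso.inv_hom_id,
      Functor.whiskerRight_id', Category.id_comp]
  have hC : Functor.whiskerLeft Φ (T.map.map εL) =
      (T.compIso φ (ψ.comp φ)).hom ≫ T.map.map (whiskerLeftLin φ εL) ≫
        (T.compIso φ (LinFun.id (ρ j))).inv := by
    rw [← Category.assoc, ← T.compIso_natural_right φ εL, Category.assoc,
      Iso.hom_inv_id, Category.comp_id]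
  have hD : Functor.whiskerLeft Φ (T.unitIso j).hom =
      (T.compIso φ (LinFun.id (ρ j))).hom ≫ T.map.map (rightUnitorLin φ) :=
    (T.right_unit_coherence φ).symm
  have key1 : Functor.whiskerRight η Φ ≫ Functor.whiskerLeft Φ ε = 𝟙 (𝟭 (T.T i) ⋙ Φ) := by
    show (Functor.whiskerRight ((T.unitIso i).inv ≫ T.map.map ηL ≫ (T.compIso φ ψ).inv) Φ : _ ⟶ _) ≫
        Functor.whiskerLeft Φ ((T.compIso ψ φ).hom ≫ T.map.map εL ≫ (T.unitIso j).hom) = _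
    rw [Functor.whiskerRight_comp, Functor.whiskerRight_comp, Functor.whiskerLeft_comp,
      Functor.whiskerLeft_comp]
    simp only [Category.assoc]
    rw [reassoc_of% hB, hA, hC, hD]
    simp only [Category.assoc, Iso.inv_hom_id_assoc]
    rw [← Functor.map_comp_assoc, ← Functor.map_comp_assoc, ← Functor.map_comp]
    rw [show ((whiskerRightLin ηL φ ≫ assocLin φ ψ φ) ≫ whiskerLeftLin φ εL) ≫
      rightUnitorLin φ = leftUnitorLin φ by simpa using tri1]
    rw [T.left_unit_coherence φ, ← Functor.whiskerRight_comp, Iso.inv_hom_id, Functor.whiskerRight_id']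
  -- helper identities, mirrored
  have hA' : Functor.whiskerLeft Ψ (T.map.map ηL) =
      (T.compIso ψ (LinFun.id (ρ i))).hom ≫ T.map.map (whiskerLeftLin ψ ηL) ≫
        (T.compIso ψ (φ.comp ψ)).inv := by
    rw [← Category.assoc, ← T.compIso_natural_right ψ ηL, Category.assoc,
      Iso.hom_inv_id, Category.comp_id]
  have hC' : Functor.whiskerRight (T.map.map εL) Ψ =
      (T.compIso (ψ.comp φ) ψ).hom ≫ T.map.map (whiskerRightLin εL ψ) ≫
        (T.compIso (LinFun.id (ρ j)) ψ).inv := by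
    rw [← Category.assoc, ← T.compIso_natural_left εL ψ, Category.assoc,
      Iso.hom_inv_id, Category.comp_id]
  have hD' : Functor.whiskerRight (T.unitIso j).hom Ψ =
      (T.compIso (LinFun.id (ρ j)) ψ).hom ≫ T.map.map (leftUnitorLin ψ) :=
    (T.left_unit_coherence ψ).symm
  have hB' : Functor.whiskerLeft Ψ (T.compIso φ ψ).inv ≫ Functor.whiskerRight (T.compIso ψ φ).hom Ψ =
      (T.compIso ψ (φ.comp ψ)).hom ≫ T.map.map (assocLinInv ψ φ ψ) ≫
        (T.compIso (ψ.comp φ) ψ).inv := by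
    have hwr : Functor.whiskerRight (T.compIso ψ φ).hom Ψ =
        Functor.whiskerLeft Ψ (T.compIso φ ψ).hom ≫ (T.compIso ψ (φ.comp ψ)).hom ≫
          T.map.map (assocLinInv ψ φ ψ) ≫ (T.compIso (ψ.comp φ) ψ).inv := by
      rw [← Category.assoc, ← T.assoc_coherence ψ φ ψ]
      simp only [Category.assoc]
      rw [← Functor.map_comp_assoc, hLinInv1, CategoryTheory.Functor.map_id,
        Category.id_comp, Iso.hom_inv_id, Category.comp_id]
    rw [hwr, ← Category.assoc, ← Functor.whiskerLeft_comp, Iso.inv_hom_id,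
      Functor.whiskerLeft_id', Category.id_comp]
  have key2 : Functor.whiskerLeft Ψ η ≫ Functor.whiskerRight ε Ψ = 𝟙 (Ψ ⋙ 𝟭 (T.T i)) := by
    show (Functor.whiskerLeft Ψ ((T.unitIso i).inv ≫ T.map.map ηL ≫ (T.compIso φ ψ).inv) : _ ⟶ _) ≫
        Functor.whiskerRight ((T.compIso ψ φ).hom ≫ T.map.map εL ≫ (T.unitIso j).hom) Ψ = _
    rw [Functor.whiskerLeft_comp, Functor.whiskerLeft_comp,
      Functor.whiskerRight_comp, Functor.whiskerRight_comp]
    simp only [Category.assoc]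
    rw [reassoc_of% hB', hA', hC', hD']
    simp only [Category.assoc, Iso.inv_hom_id_assoc]
    rw [← Functor.map_comp_assoc, ← Functor.map_comp_assoc, ← Functor.map_comp]
    rw [show ((whiskerLeftLin ψ ηL ≫ assocLinInv ψ φ ψ) ≫ whiskerRightLin εL ψ) ≫
      leftUnitorLin ψ = rightUnitorLin ψ by simpa using tri2]
    rw [T.right_unit_coherence ψ, ← Functor.whiskerLeft_comp, Iso.inv_hom_id,
      Functor.whiskerLeft_id']
  exact ⟨{
    unit := η
    counit := ε
    left_triangle_components := fun X => by simpa using congr_app key1 X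
    right_triangle_components := fun Y => by simpa using congr_app key2 Y }⟩
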